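/- Let (p*₁, b*₁) and (p*₂, b*₂) be strong pairs on a finite set S, let f, g ∈ ℝ^S with f ≤ g, and suppose Q := Q(p*₁, b*₁) ∩ Q(p*₂, b*₂) ∩ {x : f ≤ x ≤ g} is nonempty. Then max{x̃(S) : x ∈ Q} = min{b*₁(X₁) + b*₂(X₂) + g̃(X₁ᶜ ∩ X₂ᶜ) − f̃(X₁ ∩ X₂) : X₁, X₂ ⊆ S} and min{x̃(S) : x ∈ Q} = max{p*₁(X₁) + p*₂(X₂) + f̃(X₁ᶜ ∩ X₂ᶜ) − g̃(X₁ ∩ X₂) : X₁, X₂ ⊆ S}, and both optima over Q are attained. -/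

import Mathlib

open Finset

namespace Stmt6

variable {S : Type*} [Fintype S] [DecidableEq S]

lemma sum_diff_diff (x : S → ℝ) (A B : Finset S) :
    (∑ s ∈ A, x s) - ∑ s ∈ B, x s = (∑ s ∈ A \ B, x s) - ∑ s ∈ B \ A, x s := by
  have hA : ∑ s ∈ A \ B, x s + ∑ s ∈ A ∩ B, x s = ∑ s ∈ A, x s := by
    rw [← Finset.sdiff_inter_self_left A B]
    exact Finset.sum_sdiff Finset.inter_subset_left
  have hB : ∑ s ∈ B \ A, x s + ∑ s ∈ B ∩ A, x s = ∑ s ∈ B, x s := by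
    rw [← Finset.sdiff_inter_self_left B A]
    exact Finset.sum_sdiff Finset.inter_subset_left
  rw [← hA, ← hB, Finset.inter_comm B A]
  ring

def TightB (b : Finset S → ℝ) (x : S → ℝ) (Z : Finset S) : Prop := ∑ s ∈ Z, x s = b Z

def TightP (p : Finset S → ℝ) (x : S → ℝ) (Z : Finset S) : Prop := ∑ s ∈ Z, x s = p Z

section Pair

variable {p b : Finset S → ℝ} {x : S → ℝ}

lemma tightB_union
    (hub : ∀ Z, ∑ s ∈ Z, x s ≤ b Z)
    (hsub : ∀ X Y, b (X ∪ Y) + b (X ∩ Y) ≤ b X + b Y)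
    {Z W : Finset S} (hZ : TightB b x Z) (hW : TightB b x W) :
    TightB b x (Z ∪ W) ∧ TightB b x (Z ∩ W) := by
  have hmod : ∑ s ∈ Z ∪ W, x s + ∑ s ∈ Z ∩ W, x s = ∑ s ∈ Z, x s + ∑ s ∈ W, x s :=
    Finset.sum_union_inter
  have h1 := hub (Z ∪ W); have h2 := hub (Z ∩ W)
  have h3 := hsub Z W
  unfold TightB at *
  constructor <;> linarith

lemma tightB_sdiff
    (hub : ∀ Z, ∑ s ∈ Z, x s ≤ b Z)
    (hlb : ∀ Z, p Z ≤ ∑ s ∈ Z, x s)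
    (hcross : ∀ X Y, b (X \ Y) - p (Y \ X) ≤ b X - p Y)
    {A B : Finset S} (hA : TightB b x A) (hB : TightP p x B) :
    TightB b x (A \ B) ∧ TightP p x (B \ A) := by
  have hd := sum_diff_diff x A B
  have h1 := hub (A \ B); have h2 := hlb (B \ A)
  have h3 := hcross A B
  unfold TightB TightP at *
  constructor <;> linarith

lemma exists_minimal_tightB
    (hub : ∀ Z, ∑ s ∈ Z, x s ≤ b Z)
    (hsub : ∀ X Y, b (X ∪ Y) + b (X ∩ Y) ≤ b X + b Y)
    {u : S} (hcov : ∃ Z, TightB b x Z ∧ u ∈ Z) :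
    ∃ T, TightB b x T ∧ u ∈ T ∧ ∀ Z, TightB b x Z → u ∈ Z → T ⊆ Z := by
  classical
  set fam : Finset (Finset S) := univ.filter (fun Z => TightB b x Z ∧ u ∈ Z) with hfam
  have hne : fam.Nonempty := by
    obtain ⟨Z, hZ⟩ := hcov
    exact ⟨Z, by simp [hfam, hZ.1, hZ.2]⟩
  have hmemfam : ∀ Z, Z ∈ fam ↔ TightB b x Z ∧ u ∈ Z := by
    intro Z; simp [hfam]
  have hclosed : ∀ A ∈ {Z : Finset S | TightB b x Z ∧ u ∈ Z},
      ∀ B ∈ {Z : Finset S | TightB b x Z ∧ u ∈ Z},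
      A ⊓ B ∈ {Z : Finset S | TightB b x Z ∧ u ∈ Z} := by
    intro A hA B hB
    refine ⟨(tightB_union hub hsub hA.1 hB.1).2, ?_⟩
    rw [Finset.inf_eq_inter, Finset.mem_inter]
    exact ⟨hA.2, hB.2⟩
  have hT := Finset.inf'_mem _ hclosed fam hne id (fun i hi => (hmemfam i).1 hi)
  refine ⟨fam.inf' hne id, hT.1, hT.2, ?_⟩
  intro Z hZ huZ
  exact Finset.inf'_le id ((hmemfam Z).2 ⟨hZ, huZ⟩)

lemma tightB_sup
    (hb0 : b ∅ = 0)
    (hub : ∀ Z, ∑ s ∈ Z, x s ≤ b Z)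
    (hsub : ∀ X Y, b (X ∪ Y) + b (X ∩ Y) ≤ b X + b Y)
    {ι : Type*} (t : Finset ι) (F : ι → Finset S)
    (hF : ∀ i ∈ t, TightB b x (F i)) : TightB b x (t.sup F) := by
  refine Finset.sup_induction ?_ ?_ hF
  · show TightB b x ∅
    unfold TightB; simp [hb0]
  · intro a ha b' hb'
    exact (tightB_union hub hsub ha hb').1

end Pair

lemma eps_helper {α : Type*} (t : Finset α) (q r : α → ℝ)
    (hq : ∀ a ∈ t, 0 < q a) (hr : ∀ a ∈ t, 0 < r a) :
    ∃ ε : ℝ, 0 < ε ∧ ∀ a ∈ t, ε * q a ≤ r a := by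
  rcases t.eq_empty_or_nonempty with rfl | ht
  · exact ⟨1, one_pos, by simp⟩
  · refine ⟨min 1 (t.inf' ht (fun a => r a / q a)), ?_, ?_⟩
    · refine lt_min one_pos ?_
      rw [Finset.lt_inf'_iff]
      exact fun a ha => div_pos (hr a ha) (hq a ha)
    · intro a ha
      have h1 : min 1 (t.inf' ht (fun a => r a / q a)) ≤ r a / q a :=
        le_trans (min_le_right _ _) (Finset.inf'_le _ ha)
      calc min 1 (t.inf' ht (fun a => r a / q a)) * q a
          ≤ (r a / q a) * q a := mul_le_mul_of_nonneg_right h1 (hq a ha).le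
        _ = r a := div_mul_cancel₀ _ (hq a ha).ne'

lemma exists_path {α : Type*} {r : α → α → Prop} {a b : α}
    (h : Relation.ReflTransGen r a b) :
    ∃ (n : ℕ) (c : ℕ → α), c 0 = a ∧ c n = b ∧ ∀ i < n, r (c i) (c (i + 1)) := by
  induction h with
  | refl => exact ⟨0, fun _ => a, rfl, rfl, fun i hi => absurd hi (by omega)⟩
  | @tail b' c' hab hbc ih =>
    obtain ⟨n, cc, h0, hn, hstep⟩ := ih
    refine ⟨n + 1, fun i => if i ≤ n then cc i else c', by simp [h0], by simp, ?_⟩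
    intro i hi
    rcases lt_or_eq_of_le (Nat.lt_succ_iff.mp hi) with h | h
    · simpa [Nat.le_of_lt h, Nat.succ_le_of_lt h] using hstep i h
    · subst h
      simpa [hn] using hbc

lemma sum_card_fiber (n : ℕ) (c : ℕ → S) (Z : Finset S) :
    ∑ s ∈ Z, ((((Finset.range n).filter (fun i => c i = s)).card : ℝ))
      = (((Finset.range n).filter (fun i => c i ∈ Z)).card : ℝ) := by
  rw [← Nat.cast_sum]
  congr 1
  symm
  rw [Finset.card_eq_sum_card_fiberwise (f := c)
    (s := (Finset.range n).filter (fun i => c i ∈ Z))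
    (t := Z) (fun i hi => (Finset.mem_filter.mp (Finset.mem_coe.mp hi)).2)]
  refine Finset.sum_congr rfl ?_
  intro s hs
  congr 1
  ext i
  simp only [Finset.mem_filter, Finset.mem_range]
  constructor
  · rintro ⟨⟨hi, _⟩, he⟩; exact ⟨hi, he⟩
  · rintro ⟨hi, he⟩; exact ⟨⟨hi, he ▸ hs⟩, he⟩



set_option maxHeartbeats 1000000 in
theorem exists_tight_sets
    (p1 b1 p2 b2 : Finset S → ℝ)
    (hb10 : b1 ∅ = 0) (hb20 : b2 ∅ = 0)
    (hsub1 : ∀ X Y : Finset S, b1 (X ∪ Y) + b1 (X ∩ Y) ≤ b1 X + b1 Y)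
    (hcross1 : ∀ X Y : Finset S, b1 (X \ Y) - p1 (Y \ X) ≤ b1 X - p1 Y)
    (hsub2 : ∀ X Y : Finset S, b2 (X ∪ Y) + b2 (X ∩ Y) ≤ b2 X + b2 Y)
    (hcross2 : ∀ X Y : Finset S, b2 (X \ Y) - p2 (Y \ X) ≤ b2 X - p2 Y)
    (f g : S → ℝ) (x : S → ℝ)
    (hx1 : ∀ Z : Finset S, p1 Z ≤ ∑ s ∈ Z, x s ∧ ∑ s ∈ Z, x s ≤ b1 Z)
    (hx2 : ∀ Z : Finset S, p2 Z ≤ ∑ s ∈ Z, x s ∧ ∑ s ∈ Z, x s ≤ b2 Z)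
    (hxfg : ∀ s, f s ≤ x s ∧ x s ≤ g s)
    (hopt : ∀ y : S → ℝ,
      (∀ Z : Finset S, p1 Z ≤ ∑ s ∈ Z, y s ∧ ∑ s ∈ Z, y s ≤ b1 Z) →
      (∀ Z : Finset S, p2 Z ≤ ∑ s ∈ Z, y s ∧ ∑ s ∈ Z, y s ≤ b2 Z) →
      (∀ s, f s ≤ y s ∧ y s ≤ g s) → ∑ s, y s ≤ ∑ s, x s) :
    ∃ X₁ X₂ : Finset S, (∑ s ∈ X₁, x s = b1 X₁) ∧ (∑ s ∈ X₂, x s = b2 X₂) ∧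
      (∀ s ∈ X₁ ∩ X₂, x s = f s) ∧ (∀ s, s ∉ X₁ → s ∉ X₂ → x s = g s) := by
  classical
  have hub1 : ∀ Z, ∑ s ∈ Z, x s ≤ b1 Z := fun Z => (hx1 Z).2
  have hlb1 : ∀ Z, p1 Z ≤ ∑ s ∈ Z, x s := fun Z => (hx1 Z).1
  have hub2 : ∀ Z, ∑ s ∈ Z, x s ≤ b2 Z := fun Z => (hx2 Z).2
  have hlb2 : ∀ Z, p2 Z ≤ ∑ s ∈ Z, x s := fun Z => (hx2 Z).1
  set cov1 : S → Prop := fun u => ∃ Z, TightB b1 x Z ∧ u ∈ Z with hcov1def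
  set cov2 : S → Prop := fun u => ∃ Z, TightB b2 x Z ∧ u ∈ Z with hcov2def
  set T1 : S → Finset S := fun u =>
    if h : cov1 u then (exists_minimal_tightB hub1 hsub1 h).choose else ∅ with hT1def
  set T2 : S → Finset S := fun u =>
    if h : cov2 u then (exists_minimal_tightB hub2 hsub2 h).choose else ∅ with hT2def
  have hT1 : ∀ u, cov1 u → TightB b1 x (T1 u) ∧ u ∈ T1 u ∧
      ∀ Z, TightB b1 x Z → u ∈ Z → T1 u ⊆ Z := by
    intro u hu
    simp only [hT1def, dif_pos hu]
    exact (exists_minimal_tightB hub1 hsub1 hu).choose_spec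
  have hT2 : ∀ u, cov2 u → TightB b2 x (T2 u) ∧ u ∈ T2 u ∧
      ∀ Z, TightB b2 x Z → u ∈ Z → T2 u ⊆ Z := by
    intro u hu
    simp only [hT2def, dif_pos hu]
    exact (exists_minimal_tightB hub2 hsub2 hu).choose_spec
  set arc : S → S → Prop := fun u u' =>
    x u' < g u' ∧ cov1 u ∧ cov2 u' ∧ ∃ v, v ∈ T1 u ∧ v ∈ T2 u' ∧ f v < x v with harcdef
  set R : S → Prop := fun u =>
    ∃ u₀, (x u₀ < g u₀ ∧ ¬ cov2 u₀) ∧ Relation.ReflTransGen arc u₀ u with hRdef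
  have hRarc : ∀ u u', R u → arc u u' → R u' := by
    rintro u u' ⟨u₀, hst, hrt⟩ ha
    exact ⟨u₀, hst, hrt.tail ha⟩
  -- CORE: every element of R is 1-covered
  have hRcov1 : ∀ u, R u → cov1 u := by
    by_contra hcon
    push_neg at hcon
    obtain ⟨ustar, hustarR, hncov⟩ := hcon
    obtain ⟨u₀, hstart, hrtg⟩ := hustarR
    obtain ⟨k, c, hc0, hck, hstep⟩ := exists_path hrtg
    have hNS : Nonempty S := ⟨ustar⟩
    have hgood : ∀ i, i ≤ k → x (c i) < g (c i) := by
      intro i hi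
      rcases Nat.eq_zero_or_pos i with h0 | hp
      · subst h0; rw [hc0]; exact hstart.1
      · obtain ⟨j, rfl⟩ := Nat.exists_eq_add_of_lt hp
        simp only [Nat.zero_add] at *
        exact (hstep j (by omega)).1
    have hpcov1 : ∀ i, i < k → cov1 (c i) := fun i hi => (hstep i hi).2.1
    have hpcov2 : ∀ i, i < k → cov2 (c (i + 1)) := fun i hi => (hstep i hi).2.2.1
    have hv' : ∀ i, ∃ w : S, i < k →
        (w ∈ T1 (c i) ∧ w ∈ T2 (c (i + 1)) ∧ f w < x w) := by
      intro i
      by_cases h : i < k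
      · obtain ⟨w, hw⟩ := (hstep i h).2.2.2
        exact ⟨w, fun _ => hw⟩
      · exact ⟨Classical.arbitrary S, fun hh => absurd hh h⟩
    choose v hvspec using hv'
    set d : S → ℝ := fun s =>
      (((range (k + 1)).filter (fun i => c i = s)).card : ℝ)
        - (((range k).filter (fun i => v i = s)).card : ℝ) with hddef
    have hdZ : ∀ Z : Finset S, ∑ s ∈ Z, d s =
        (((range (k + 1)).filter (fun i => c i ∈ Z)).card : ℝ)
          - (((range k).filter (fun i => v i ∈ Z)).card : ℝ) := by
      intro Z
      simp only [hddef, Finset.sum_sub_distrib, sum_card_fiber]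
    -- univ sum is 1
    have hdS : ∑ s, d s = 1 := by
      rw [hdZ univ]
      simp
    -- B1 tight sets
    have hB1 : ∀ Z, TightB b1 x Z → ∑ s ∈ Z, d s ≤ 0 := by
      intro Z hZ
      rw [hdZ, sub_nonpos, Nat.cast_le]
      refine Finset.card_le_card_of_injOn (fun i => i) ?_ ?_
      · intro i hi
        rw [Finset.mem_coe, Finset.mem_filter, Finset.mem_range] at hi
        have hik : i < k := by
          rcases Nat.lt_succ_iff_lt_or_eq.mp hi.1 with h | h
          · exact h
          · exfalso; apply hncov; rw [hcov1def]
            exact ⟨Z, hZ, by rw [← hck, ← h]; exact hi.2⟩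
        have hc1 : cov1 (c i) := ⟨Z, hZ, hi.2⟩
        have hsubZ : T1 (c i) ⊆ Z := (hT1 _ hc1).2.2 Z hZ hi.2
        rw [Finset.mem_coe, Finset.mem_filter, Finset.mem_range]
        refine ⟨?_, hsubZ ((hvspec i hik).1)⟩
        show i < k
        exact hik
      · exact fun a _ b _ h => h
    -- B2 tight sets
    have hB2 : ∀ Z, TightB b2 x Z → ∑ s ∈ Z, d s ≤ 0 := by
      intro Z hZ
      rw [hdZ, sub_nonpos, Nat.cast_le]
      refine Finset.card_le_card_of_injOn (fun i => i - 1) ?_ ?_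
      · intro i hi
        rw [Finset.mem_coe, Finset.mem_filter, Finset.mem_range] at hi
        have hi0 : i ≠ 0 := by
          intro h0
          apply hstart.2
          rw [hcov2def]
          exact ⟨Z, hZ, by rw [← hc0, ← h0]; exact hi.2⟩
        obtain ⟨j, rfl⟩ := Nat.exists_eq_succ_of_ne_zero hi0
        have hjk : j < k := by omega
        have hc2 : cov2 (c (j + 1)) := ⟨Z, hZ, hi.2⟩
        have hsubZ : T2 (c (j + 1)) ⊆ Z := (hT2 _ hc2).2.2 Z hZ hi.2
        rw [Finset.mem_coe, Finset.mem_filter, Finset.mem_range]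
        refine ⟨?_, hsubZ ((hvspec j hjk).2.1)⟩
        show j + 1 - 1 < k
        omega
      · intro a ha b hb h
        rw [Finset.coe_filter] at ha hb
        have ha0 : a ≠ 0 := by
          rintro rfl
          apply hstart.2
          rw [hcov2def]
          refine ⟨Z, hZ, ?_⟩
          rw [← hc0]; exact ha.2
        have hb0 : b ≠ 0 := by
          rintro rfl
          apply hstart.2
          rw [hcov2def]
          refine ⟨Z, hZ, ?_⟩
          rw [← hc0]; exact hb.2
        have h' : a - 1 = b - 1 := h
        omega
    -- P1 tight sets
    have hP1 : ∀ Z, TightP p1 x Z → 0 ≤ ∑ s ∈ Z, d s := by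
      intro Z hZ
      rw [hdZ, sub_nonneg, Nat.cast_le]
      refine Finset.card_le_card_of_injOn (fun i => i) ?_ ?_
      · intro i hi
        rw [Finset.mem_coe, Finset.mem_filter, Finset.mem_range] at hi
        have hik : i < k := hi.1
        have hc1 : cov1 (c i) := hpcov1 i hik
        rw [Finset.mem_coe, Finset.mem_filter, Finset.mem_range]
        refine ⟨?_, ?_⟩
        · show i < k + 1
          omega
        by_contra hciZ
        have hdiff := tightB_sdiff hub1 hlb1 hcross1 (hT1 _ hc1).1 hZ
        have hmemd : c i ∈ T1 (c i) \ Z := by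
          rw [Finset.mem_sdiff]
          exact ⟨(hT1 _ hc1).2.1, hciZ⟩
        have hmin : T1 (c i) ⊆ T1 (c i) \ Z :=
          (hT1 _ hc1).2.2 _ hdiff.1 hmemd
        have := hmin (hvspec i hik).1
        rw [Finset.mem_sdiff] at this
        exact this.2 hi.2
      · exact fun a _ b _ h => h
    -- P2 tight sets
    have hP2 : ∀ Z, TightP p2 x Z → 0 ≤ ∑ s ∈ Z, d s := by
      intro Z hZ
      rw [hdZ, sub_nonneg, Nat.cast_le]
      refine Finset.card_le_card_of_injOn (fun i => i + 1) ?_ ?_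
      · intro i hi
        rw [Finset.mem_coe, Finset.mem_filter, Finset.mem_range] at hi
        have hik : i < k := hi.1
        have hc2 : cov2 (c (i + 1)) := hpcov2 i hik
        rw [Finset.mem_coe, Finset.mem_filter, Finset.mem_range]
        refine ⟨?_, ?_⟩
        · show i + 1 < k + 1
          omega
        by_contra hciZ
        have hdiff := tightB_sdiff hub2 hlb2 hcross2 (hT2 _ hc2).1 hZ
        have hmemd : c (i + 1) ∈ T2 (c (i + 1)) \ Z := by
          rw [Finset.mem_sdiff]
          exact ⟨(hT2 _ hc2).2.1, hciZ⟩
        have hmin : T2 (c (i + 1)) ⊆ T2 (c (i + 1)) \ Z :=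
          (hT2 _ hc2).2.2 _ hdiff.1 hmemd
        have := hmin (hvspec i hik).2.1
        rw [Finset.mem_sdiff] at this
        exact this.2 hi.2
      · intro a _ b _ h
        have h' : a + 1 = b + 1 := h
        omega
    -- pointwise
    have hdpos : ∀ s, 0 < d s → x s < g s := by
      intro s hs
      have : ((range (k + 1)).filter (fun i => c i = s)).Nonempty := by
        rw [Finset.nonempty_iff_ne_empty]
        intro h
        rw [hddef] at hs
        simp only [h, Finset.card_empty, Nat.cast_zero, zero_sub, neg_pos] at hs
        have : (0:ℝ) ≤ (((range k).filter (fun i => v i = s)).card : ℝ) := Nat.cast_nonneg _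
        linarith
      obtain ⟨i, hi⟩ := this
      rw [Finset.mem_filter, Finset.mem_range] at hi
      rw [← hi.2]
      exact hgood i (by omega)
    have hdneg : ∀ s, d s < 0 → f s < x s := by
      intro s hs
      have : ((range k).filter (fun i => v i = s)).Nonempty := by
        rw [Finset.nonempty_iff_ne_empty]
        intro h
        rw [hddef] at hs
        simp only [h, Finset.card_empty, Nat.cast_zero, sub_zero] at hs
        have : (0:ℝ) ≤ (((range (k+1)).filter (fun i => c i = s)).card : ℝ) := Nat.cast_nonneg _
        linarith
      obtain ⟨i, hi⟩ := this
      rw [Finset.mem_filter, Finset.mem_range] at hi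
      rw [← hi.2]
      exact (hvspec i hi.1).2.2
    -- epsilons
    obtain ⟨ε1, hε1pos, hε1⟩ := eps_helper (univ.filter (fun Z : Finset S => 0 < ∑ s ∈ Z, d s))
      (fun Z => ∑ s ∈ Z, d s) (fun Z => b1 Z - ∑ s ∈ Z, x s)
      (fun Z hZ => (Finset.mem_filter.mp hZ).2)
      (by
        intro Z hZ
        have h := (Finset.mem_filter.mp hZ).2
        have hne : (∑ s ∈ Z, x s) ≠ b1 Z := fun ht => absurd (hB1 Z ht) (not_le.mpr h)
        have := lt_of_le_of_ne (hub1 Z) hne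
        show 0 < b1 Z - ∑ s ∈ Z, x s
        linarith)
    obtain ⟨ε2, hε2pos, hε2⟩ := eps_helper (univ.filter (fun Z : Finset S => 0 < ∑ s ∈ Z, d s))
      (fun Z => ∑ s ∈ Z, d s) (fun Z => b2 Z - ∑ s ∈ Z, x s)
      (fun Z hZ => (Finset.mem_filter.mp hZ).2)
      (by
        intro Z hZ
        have h := (Finset.mem_filter.mp hZ).2
        have hne : (∑ s ∈ Z, x s) ≠ b2 Z := fun ht => absurd (hB2 Z ht) (not_le.mpr h)
        have := lt_of_le_of_ne (hub2 Z) hne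
        show 0 < b2 Z - ∑ s ∈ Z, x s
        linarith)
    obtain ⟨ε3, hε3pos, hε3⟩ := eps_helper (univ.filter (fun Z : Finset S => ∑ s ∈ Z, d s < 0))
      (fun Z => -∑ s ∈ Z, d s) (fun Z => ∑ s ∈ Z, x s - p1 Z)
      (fun Z hZ => by
        have := (Finset.mem_filter.mp hZ).2
        show 0 < -∑ s ∈ Z, d s
        linarith)
      (by
        intro Z hZ
        have h := (Finset.mem_filter.mp hZ).2
        have hne : (∑ s ∈ Z, x s) ≠ p1 Z := fun ht => absurd (hP1 Z ht) (not_le.mpr h)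
        have : p1 Z < ∑ s ∈ Z, x s := lt_of_le_of_ne (hlb1 Z) (fun he => hne he.symm)
        show 0 < ∑ s ∈ Z, x s - p1 Z
        linarith)
    obtain ⟨ε4, hε4pos, hε4⟩ := eps_helper (univ.filter (fun Z : Finset S => ∑ s ∈ Z, d s < 0))
      (fun Z => -∑ s ∈ Z, d s) (fun Z => ∑ s ∈ Z, x s - p2 Z)
      (fun Z hZ => by
        have := (Finset.mem_filter.mp hZ).2
        show 0 < -∑ s ∈ Z, d s
        linarith)
      (by
        intro Z hZ
        have h := (Finset.mem_filter.mp hZ).2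
        have hne : (∑ s ∈ Z, x s) ≠ p2 Z := fun ht => absurd (hP2 Z ht) (not_le.mpr h)
        have : p2 Z < ∑ s ∈ Z, x s := lt_of_le_of_ne (hlb2 Z) (fun he => hne he.symm)
        show 0 < ∑ s ∈ Z, x s - p2 Z
        linarith)
    obtain ⟨ε5, hε5pos, hε5⟩ := eps_helper (univ.filter (fun s : S => 0 < d s))
      (fun s => d s) (fun s => g s - x s)
      (fun s hs => (Finset.mem_filter.mp hs).2)
      (fun s hs => by
        have := hdpos s (Finset.mem_filter.mp hs).2
        show 0 < g s - x s
        linarith)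
    obtain ⟨ε6, hε6pos, hε6⟩ := eps_helper (univ.filter (fun s : S => d s < 0))
      (fun s => -d s) (fun s => x s - f s)
      (fun s hs => by
        have := (Finset.mem_filter.mp hs).2
        show 0 < -d s
        linarith)
      (fun s hs => by
        have := hdneg s (Finset.mem_filter.mp hs).2
        show 0 < x s - f s
        linarith)
    set ε : ℝ := min ε1 (min ε2 (min ε3 (min ε4 (min ε5 ε6)))) with hεdef
    have hεpos : 0 < ε := by
      simp only [hεdef, lt_min_iff]
      exact ⟨hε1pos, hε2pos, hε3pos, hε4pos, hε5pos, hε6pos⟩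
    have hεle1 : ε ≤ ε1 := min_le_left _ _
    have hεle2 : ε ≤ ε2 := le_trans (min_le_right _ _) (min_le_left _ _)
    have hεle3 : ε ≤ ε3 := le_trans (min_le_right _ _) (le_trans (min_le_right _ _) (min_le_left _ _))
    have hεle4 : ε ≤ ε4 := le_trans (min_le_right _ _) (le_trans (min_le_right _ _)
      (le_trans (min_le_right _ _) (min_le_left _ _)))
    have hεle5 : ε ≤ ε5 := le_trans (min_le_right _ _) (le_trans (min_le_right _ _)
      (le_trans (min_le_right _ _) (le_trans (min_le_right _ _) (min_le_left _ _))))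
    have hεle6 : ε ≤ ε6 := le_trans (min_le_right _ _) (le_trans (min_le_right _ _)
      (le_trans (min_le_right _ _) (le_trans (min_le_right _ _) (min_le_right _ _))))
    set y : S → ℝ := fun s => x s + ε * d s with hydef
    have hysum : ∀ Z : Finset S, ∑ s ∈ Z, y s = ∑ s ∈ Z, x s + ε * ∑ s ∈ Z, d s := by
      intro Z
      simp only [hydef, Finset.sum_add_distrib, Finset.mul_sum]
    have hupper : ∀ (bb : Finset S → ℝ) εu, ε ≤ εu →
        (∀ Z, ∑ s ∈ Z, x s ≤ bb Z) →
        (∀ Z ∈ univ.filter (fun Z : Finset S => 0 < ∑ s ∈ Z, d s),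
          εu * (∑ s ∈ Z, d s) ≤ bb Z - ∑ s ∈ Z, x s) →
        ∀ Z, ∑ s ∈ Z, y s ≤ bb Z := by
      intro bb εu hle hub hb Z
      rw [hysum]
      rcases le_or_gt (∑ s ∈ Z, d s) 0 with h | h
      · have : ε * (∑ s ∈ Z, d s) ≤ 0 := mul_nonpos_of_nonneg_of_nonpos hεpos.le h
        linarith [hub Z]
      · have hb' := hb Z (Finset.mem_filter.mpr ⟨Finset.mem_univ Z, h⟩)
        have : ε * (∑ s ∈ Z, d s) ≤ εu * (∑ s ∈ Z, d s) :=
          mul_le_mul_of_nonneg_right hle h.le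
        linarith
    have hlower : ∀ (pp : Finset S → ℝ) εl, ε ≤ εl →
        (∀ Z, pp Z ≤ ∑ s ∈ Z, x s) →
        (∀ Z ∈ univ.filter (fun Z : Finset S => ∑ s ∈ Z, d s < 0),
          εl * (-∑ s ∈ Z, d s) ≤ ∑ s ∈ Z, x s - pp Z) →
        ∀ Z, pp Z ≤ ∑ s ∈ Z, y s := by
      intro pp εl hle hlb hp Z
      rw [hysum]
      rcases le_or_gt 0 (∑ s ∈ Z, d s) with h | h
      · have : 0 ≤ ε * (∑ s ∈ Z, d s) := mul_nonneg hεpos.le h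
        linarith [hlb Z]
      · have hp' := hp Z (Finset.mem_filter.mpr ⟨Finset.mem_univ Z, h⟩)
        have h1 : ε * (-∑ s ∈ Z, d s) ≤ εl * (-∑ s ∈ Z, d s) :=
          mul_le_mul_of_nonneg_right hle (by linarith)
        nlinarith
    have hy1 : ∀ Z : Finset S, p1 Z ≤ ∑ s ∈ Z, y s ∧ ∑ s ∈ Z, y s ≤ b1 Z := fun Z =>
      ⟨hlower p1 ε3 hεle3 hlb1 hε3 Z, hupper b1 ε1 hεle1 hub1 hε1 Z⟩
    have hy2 : ∀ Z : Finset S, p2 Z ≤ ∑ s ∈ Z, y s ∧ ∑ s ∈ Z, y s ≤ b2 Z := fun Z =>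
      ⟨hlower p2 ε4 hεle4 hlb2 hε4 Z, hupper b2 ε2 hεle2 hub2 hε2 Z⟩
    have hyfg : ∀ s, f s ≤ y s ∧ y s ≤ g s := by
      intro s
      rcases lt_trichotomy (d s) 0 with h | h | h
      · constructor
        · have h6 := hε6 s (Finset.mem_filter.mpr ⟨Finset.mem_univ s, h⟩)
          have : ε * (-d s) ≤ ε6 * (-d s) := mul_le_mul_of_nonneg_right hεle6 (by linarith)
          simp only [hydef]
          nlinarith
        · have : ε * d s ≤ 0 := mul_nonpos_of_nonneg_of_nonpos hεpos.le h.le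
          simp only [hydef]
          linarith [(hxfg s).2]
      · simp only [hydef, h, mul_zero, add_zero]
        exact hxfg s
      · constructor
        · have : 0 ≤ ε * d s := mul_nonneg hεpos.le h.le
          simp only [hydef]
          linarith [(hxfg s).1]
        · have h5 := hε5 s (Finset.mem_filter.mpr ⟨Finset.mem_univ s, h⟩)
          have : ε * d s ≤ ε5 * d s := mul_le_mul_of_nonneg_right hεle5 h.le
          simp only [hydef]
          linarith
    have hcontra := hopt y hy1 hy2 hyfg
    rw [hysum univ, hdS] at hcontra
    have : ∑ s, x s < ∑ s, x s + ε * 1 := by linarith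
    rw [show (∑ s ∈ univ, x s) = ∑ s, x s from rfl] at hcontra
    linarith
  -- construct X₁, X₂
  set X₁ : Finset S := (univ.filter (fun u => R u)).sup T1 with hX₁def
  set X₂ : Finset S := (univ.filter (fun u => x u < g u ∧ cov2 u ∧ ¬ R u)).sup T2 with hX₂def
  have hX₁tight : TightB b1 x X₁ := by
    refine tightB_sup hb10 hub1 hsub1 _ _ ?_
    intro u hu
    rw [Finset.mem_filter] at hu
    exact (hT1 u (hRcov1 u hu.2)).1
  have hX₂tight : TightB b2 x X₂ := by
    refine tightB_sup hb20 hub2 hsub2 _ _ ?_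
    intro u hu
    rw [Finset.mem_filter] at hu
    exact (hT2 u hu.2.2.1).1
  refine ⟨X₁, X₂, hX₁tight, hX₂tight, ?_, ?_⟩
  · -- x = f on X₁ ∩ X₂
    intro s hs
    rw [Finset.mem_inter] at hs
    obtain ⟨u, hu, hsT1⟩ := Finset.mem_sup.mp hs.1
    obtain ⟨u', hu', hsT2⟩ := Finset.mem_sup.mp hs.2
    rw [Finset.mem_filter] at hu hu'
    by_contra hne
    have hflt : f s < x s := lt_of_le_of_ne (hxfg s).1 (fun h => hne h.symm)
    have harc : arc u u' := by
      rw [harcdef]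
      exact ⟨hu'.2.1, hRcov1 u hu.2, hu'.2.2.1, s, hsT1, hsT2, hflt⟩
    exact hu'.2.2.2 (hRarc u u' hu.2 harc)
  · -- x = g off X₁ ∪ X₂
    intro s hs1 hs2
    by_contra hne
    have hlt : x s < g s := lt_of_le_of_ne (hxfg s).2 hne
    by_cases hc2 : cov2 s
    · by_cases hR : R s
      · apply hs1
        have : T1 s ⊆ X₁ := Finset.le_sup (Finset.mem_filter.mpr ⟨Finset.mem_univ s, hR⟩)
        exact this ((hT1 s (hRcov1 s hR)).2.1)
      · apply hs2
        have : T2 s ⊆ X₂ :=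
          Finset.le_sup (Finset.mem_filter.mpr ⟨Finset.mem_univ s, hlt, hc2, hR⟩)
        exact this ((hT2 s hc2).2.1)
    · have hRs : R s := ⟨s, ⟨hlt, hc2⟩, Relation.ReflTransGen.refl⟩
      apply hs1
      have : T1 s ⊆ X₁ := Finset.le_sup (Finset.mem_filter.mpr ⟨Finset.mem_univ s, hRs⟩)
      exact this ((hT1 s (hRcov1 s hRs)).2.1)



lemma sum_decomp (y : S → ℝ) (Y₁ Y₂ : Finset S) :
    ∑ s, y s = (∑ s ∈ Y₁, y s) + (∑ s ∈ Y₂, y s) - (∑ s ∈ Y₁ ∩ Y₂, y s)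
      + ∑ s ∈ Y₁ᶜ ∩ Y₂ᶜ, y s := by
  have h1 : (∑ s ∈ Y₁ ∪ Y₂, y s) + ∑ s ∈ (Y₁ ∪ Y₂)ᶜ, y s = ∑ s, y s :=
    Finset.sum_add_sum_compl _ _
  have h2 : (∑ s ∈ Y₁ ∪ Y₂, y s) + ∑ s ∈ Y₁ ∩ Y₂, y s
      = (∑ s ∈ Y₁, y s) + ∑ s ∈ Y₂, y s := Finset.sum_union_inter
  rw [Finset.compl_union] at h1
  linarith

theorem polymax
    (p1 b1 p2 b2 : Finset S → ℝ)
    (hp10 : p1 ∅ = 0) (hb10 : b1 ∅ = 0) (hp20 : p2 ∅ = 0) (hb20 : b2 ∅ = 0)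
    (hsuper1 : ∀ X Y : Finset S, p1 X + p1 Y ≤ p1 (X ∪ Y) + p1 (X ∩ Y))
    (hsub1 : ∀ X Y : Finset S, b1 (X ∪ Y) + b1 (X ∩ Y) ≤ b1 X + b1 Y)
    (hcross1 : ∀ X Y : Finset S, b1 (X \ Y) - p1 (Y \ X) ≤ b1 X - p1 Y)
    (hsuper2 : ∀ X Y : Finset S, p2 X + p2 Y ≤ p2 (X ∪ Y) + p2 (X ∩ Y))
    (hsub2 : ∀ X Y : Finset S, b2 (X ∪ Y) + b2 (X ∩ Y) ≤ b2 X + b2 Y)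
    (hcross2 : ∀ X Y : Finset S, b2 (X \ Y) - p2 (Y \ X) ≤ b2 X - p2 Y)
    (f g : S → ℝ) (hfg : ∀ s, f s ≤ g s)
    (hne : {x : S → ℝ |
        (∀ Z : Finset S, p1 Z ≤ ∑ s ∈ Z, x s ∧ ∑ s ∈ Z, x s ≤ b1 Z) ∧
        (∀ Z : Finset S, p2 Z ≤ ∑ s ∈ Z, x s ∧ ∑ s ∈ Z, x s ≤ b2 Z) ∧
        (∀ s, f s ≤ x s ∧ x s ≤ g s)}.Nonempty) :
    ∃ M : ℝ,
      IsGreatest ((fun x : S → ℝ => ∑ s, x s) ''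
          {x : S → ℝ |
            (∀ Z : Finset S, p1 Z ≤ ∑ s ∈ Z, x s ∧ ∑ s ∈ Z, x s ≤ b1 Z) ∧
            (∀ Z : Finset S, p2 Z ≤ ∑ s ∈ Z, x s ∧ ∑ s ∈ Z, x s ≤ b2 Z) ∧
            (∀ s, f s ≤ x s ∧ x s ≤ g s)}) M ∧
      IsLeast {v : ℝ | ∃ X₁ X₂ : Finset S,
          v = b1 X₁ + b2 X₂ + ∑ s ∈ X₁ᶜ ∩ X₂ᶜ, g s - ∑ s ∈ X₁ ∩ X₂, f s} M := by
  classical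
  set Q : Set (S → ℝ) := {x : S → ℝ |
      (∀ Z : Finset S, p1 Z ≤ ∑ s ∈ Z, x s ∧ ∑ s ∈ Z, x s ≤ b1 Z) ∧
      (∀ Z : Finset S, p2 Z ≤ ∑ s ∈ Z, x s ∧ ∑ s ∈ Z, x s ≤ b2 Z) ∧
      (∀ s, f s ≤ x s ∧ x s ≤ g s)} with hQdef
  have hsumcont : ∀ Z : Finset S, Continuous (fun x : S → ℝ => ∑ s ∈ Z, x s) :=
    fun Z => continuous_finset_sum _ (fun s _ => continuous_apply s)
  have hclosed : IsClosed Q := by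
    have : Q = (⋂ Z : Finset S,
        ({x : S → ℝ | p1 Z ≤ ∑ s ∈ Z, x s} ∩ {x : S → ℝ | ∑ s ∈ Z, x s ≤ b1 Z})) ∩
        ((⋂ Z : Finset S,
        ({x : S → ℝ | p2 Z ≤ ∑ s ∈ Z, x s} ∩ {x : S → ℝ | ∑ s ∈ Z, x s ≤ b2 Z})) ∩
        (⋂ s : S, ({x : S → ℝ | f s ≤ x s} ∩ {x : S → ℝ | x s ≤ g s}))) := by
      ext x
      simp only [hQdef, Set.mem_setOf_eq, Set.mem_inter_iff, Set.mem_iInter]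
    rw [this]
    refine IsClosed.inter (isClosed_iInter fun Z => IsClosed.inter ?_ ?_)
      (IsClosed.inter (isClosed_iInter fun Z => IsClosed.inter ?_ ?_)
        (isClosed_iInter fun s => IsClosed.inter ?_ ?_))
    · exact isClosed_le continuous_const (hsumcont Z)
    · exact isClosed_le (hsumcont Z) continuous_const
    · exact isClosed_le continuous_const (hsumcont Z)
    · exact isClosed_le (hsumcont Z) continuous_const
    · exact isClosed_le continuous_const (continuous_apply s)
    · exact isClosed_le (continuous_apply s) continuous_const
  have hsubIcc : Q ⊆ Set.Icc f g := by
    intro x hx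
    rw [Set.mem_Icc]
    constructor
    · intro s; exact (hx.2.2 s).1
    · intro s; exact (hx.2.2 s).2
  have hcompact : IsCompact Q :=
    IsCompact.of_isClosed_subset isCompact_Icc hclosed hsubIcc
  obtain ⟨x, hxQ, hxmax⟩ := hcompact.exists_isMaxOn hne
    ((hsumcont univ).continuousOn)
  have hopt : ∀ y ∈ Q, ∑ s, y s ≤ ∑ s, x s := fun y hy => hxmax hy
  -- weak duality
  have hweak : ∀ y ∈ Q, ∀ Y₁ Y₂ : Finset S,
      ∑ s, y s ≤ b1 Y₁ + b2 Y₂ + ∑ s ∈ Y₁ᶜ ∩ Y₂ᶜ, g s - ∑ s ∈ Y₁ ∩ Y₂, f s := by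
    intro y hy Y₁ Y₂
    rw [sum_decomp y Y₁ Y₂]
    have h1 : ∑ s ∈ Y₁, y s ≤ b1 Y₁ := (hy.1 Y₁).2
    have h2 : ∑ s ∈ Y₂, y s ≤ b2 Y₂ := (hy.2.1 Y₂).2
    have h3 : ∑ s ∈ Y₁ᶜ ∩ Y₂ᶜ, y s ≤ ∑ s ∈ Y₁ᶜ ∩ Y₂ᶜ, g s :=
      Finset.sum_le_sum fun s _ => (hy.2.2 s).2
    have h4 : ∑ s ∈ Y₁ ∩ Y₂, f s ≤ ∑ s ∈ Y₁ ∩ Y₂, y s :=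
      Finset.sum_le_sum fun s _ => (hy.2.2 s).1
    linarith
  -- strong duality
  obtain ⟨X₁, X₂, hX₁, hX₂, hf, hg⟩ := exists_tight_sets p1 b1 p2 b2 hb10 hb20
    hsub1 hcross1 hsub2 hcross2 f g x hxQ.1 hxQ.2.1 hxQ.2.2
    (fun y hy1 hy2 hy3 => hopt y ⟨hy1, hy2, hy3⟩)
  have heq : ∑ s, x s
      = b1 X₁ + b2 X₂ + ∑ s ∈ X₁ᶜ ∩ X₂ᶜ, g s - ∑ s ∈ X₁ ∩ X₂, f s := by
    rw [sum_decomp x X₁ X₂]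
    have h3 : ∑ s ∈ X₁ᶜ ∩ X₂ᶜ, x s = ∑ s ∈ X₁ᶜ ∩ X₂ᶜ, g s := by
      refine Finset.sum_congr rfl fun s hs => ?_
      rw [Finset.mem_inter, Finset.mem_compl, Finset.mem_compl] at hs
      exact hg s hs.1 hs.2
    have h4 : ∑ s ∈ X₁ ∩ X₂, x s = ∑ s ∈ X₁ ∩ X₂, f s :=
      Finset.sum_congr rfl fun s hs => hf s hs
    rw [hX₁, hX₂] at *
    linarith
  refine ⟨∑ s, x s, ⟨⟨x, hxQ, rfl⟩, ?_⟩, ⟨⟨X₁, X₂, heq⟩, ?_⟩⟩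
  · rintro v ⟨y, hy, rfl⟩
    exact hopt y hy
  · rintro v ⟨Y₁, Y₂, rfl⟩
    exact hweak x hxQ Y₁ Y₂

end Stmt6


/-- min-max formulae for the total sum x̃(S) over the intersection
of two g-polymatroids with a box (Corollary maxx(S)). -/
theorem stmt_6 {S : Type*} [Fintype S] [DecidableEq S]
    (p1 b1 p2 b2 : Finset S → ℝ)
    (hp10 : p1 ∅ = 0) (hb10 : b1 ∅ = 0) (hp20 : p2 ∅ = 0) (hb20 : b2 ∅ = 0)
    (hsuper1 : ∀ X Y : Finset S, p1 X + p1 Y ≤ p1 (X ∪ Y) + p1 (X ∩ Y))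
    (hsub1 : ∀ X Y : Finset S, b1 (X ∪ Y) + b1 (X ∩ Y) ≤ b1 X + b1 Y)
    (hcross1 : ∀ X Y : Finset S, b1 (X \ Y) - p1 (Y \ X) ≤ b1 X - p1 Y)
    (hsuper2 : ∀ X Y : Finset S, p2 X + p2 Y ≤ p2 (X ∪ Y) + p2 (X ∩ Y))
    (hsub2 : ∀ X Y : Finset S, b2 (X ∪ Y) + b2 (X ∩ Y) ≤ b2 X + b2 Y)
    (hcross2 : ∀ X Y : Finset S, b2 (X \ Y) - p2 (Y \ X) ≤ b2 X - p2 Y)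
    (f g : S → ℝ) (hfg : ∀ s, f s ≤ g s)
    (hne : {x : S → ℝ |
        (∀ Z : Finset S, p1 Z ≤ ∑ s ∈ Z, x s ∧ ∑ s ∈ Z, x s ≤ b1 Z) ∧
        (∀ Z : Finset S, p2 Z ≤ ∑ s ∈ Z, x s ∧ ∑ s ∈ Z, x s ≤ b2 Z) ∧
        (∀ s, f s ≤ x s ∧ x s ≤ g s)}.Nonempty) :
    (∃ M : ℝ,
      IsGreatest ((fun x : S → ℝ => ∑ s, x s) ''
          {x : S → ℝ |
            (∀ Z : Finset S, p1 Z ≤ ∑ s ∈ Z, x s ∧ ∑ s ∈ Z, x s ≤ b1 Z) ∧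
            (∀ Z : Finset S, p2 Z ≤ ∑ s ∈ Z, x s ∧ ∑ s ∈ Z, x s ≤ b2 Z) ∧
            (∀ s, f s ≤ x s ∧ x s ≤ g s)}) M ∧
      IsLeast {v : ℝ | ∃ X₁ X₂ : Finset S,
          v = b1 X₁ + b2 X₂ + ∑ s ∈ X₁ᶜ ∩ X₂ᶜ, g s - ∑ s ∈ X₁ ∩ X₂, f s} M) ∧
    (∃ M : ℝ,
      IsLeast ((fun x : S → ℝ => ∑ s, x s) ''
          {x : S → ℝ |
            (∀ Z : Finset S, p1 Z ≤ ∑ s ∈ Z, x s ∧ ∑ s ∈ Z, x s ≤ b1 Z) ∧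
            (∀ Z : Finset S, p2 Z ≤ ∑ s ∈ Z, x s ∧ ∑ s ∈ Z, x s ≤ b2 Z) ∧
            (∀ s, f s ≤ x s ∧ x s ≤ g s)}) M ∧
      IsGreatest {v : ℝ | ∃ X₁ X₂ : Finset S,
          v = p1 X₁ + p2 X₂ + ∑ s ∈ X₁ᶜ ∩ X₂ᶜ, f s - ∑ s ∈ X₁ ∩ X₂, g s} M) := by
  constructor
  · exact Stmt6.polymax p1 b1 p2 b2 hp10 hb10 hp20 hb20 hsuper1 hsub1 hcross1
      hsuper2 hsub2 hcross2 f g hfg hne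
  · -- negation symmetry
    set p1' : Finset S → ℝ := fun Z => -b1 Z with hp1'
    set b1' : Finset S → ℝ := fun Z => -p1 Z with hb1'
    set p2' : Finset S → ℝ := fun Z => -b2 Z with hp2'
    set b2' : Finset S → ℝ := fun Z => -p2 Z with hb2'
    set f' : S → ℝ := fun s => -g s with hf'
    set g' : S → ℝ := fun s => -f s with hg'
    have hQQ' : ∀ z : S → ℝ,
        ((∀ Z : Finset S, p1 Z ≤ ∑ s ∈ Z, z s ∧ ∑ s ∈ Z, z s ≤ b1 Z) ∧
         (∀ Z : Finset S, p2 Z ≤ ∑ s ∈ Z, z s ∧ ∑ s ∈ Z, z s ≤ b2 Z) ∧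
         (∀ s, f s ≤ z s ∧ z s ≤ g s)) ↔
        ((∀ Z : Finset S, p1' Z ≤ ∑ s ∈ Z, (-z s) ∧ ∑ s ∈ Z, (-z s) ≤ b1' Z) ∧
         (∀ Z : Finset S, p2' Z ≤ ∑ s ∈ Z, (-z s) ∧ ∑ s ∈ Z, (-z s) ≤ b2' Z) ∧
         (∀ s, f' s ≤ -z s ∧ -z s ≤ g' s)) := by
      intro z
      have hsn : ∀ Z : Finset S, ∑ s ∈ Z, (-z s) = -∑ s ∈ Z, z s := fun Z =>
        Finset.sum_neg_distrib _
      constructor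
      · rintro ⟨h1, h2, h3⟩
        refine ⟨fun Z => ?_, fun Z => ?_, fun s => ?_⟩
        · have := h1 Z; rw [hsn Z]; simp only [hp1', hb1']; constructor <;> linarith [this.1, this.2]
        · have := h2 Z; rw [hsn Z]; simp only [hp2', hb2']; constructor <;> linarith [this.1, this.2]
        · have := h3 s; simp only [hf', hg']; constructor <;> linarith [this.1, this.2]
      · rintro ⟨h1, h2, h3⟩
        refine ⟨fun Z => ?_, fun Z => ?_, fun s => ?_⟩
        · have := h1 Z; rw [hsn Z] at this; simp only [hp1', hb1'] at this
          constructor <;> linarith [this.1, this.2]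
        · have := h2 Z; rw [hsn Z] at this; simp only [hp2', hb2'] at this
          constructor <;> linarith [this.1, this.2]
        · have := h3 s; simp only [hf', hg'] at this; constructor <;> linarith [this.1, this.2]
    obtain ⟨M', hG', hL'⟩ := Stmt6.polymax p1' b1' p2' b2'
      (by simp [hp1', hb10]) (by simp [hb1', hp10]) (by simp [hp2', hb20]) (by simp [hb2', hp20])
      (fun X Y => by simp only [hp1']; linarith [hsub1 X Y])
      (fun X Y => by simp only [hb1']; linarith [hsuper1 X Y])
      (fun X Y => by simp only [hp1', hb1']; linarith [hcross1 Y X])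
      (fun X Y => by simp only [hp2']; linarith [hsub2 X Y])
      (fun X Y => by simp only [hb2']; linarith [hsuper2 X Y])
      (fun X Y => by simp only [hp2', hb2']; linarith [hcross2 Y X])
      f' g' (fun s => by simp only [hf', hg']; linarith [hfg s])
      (by
        obtain ⟨x₀, hx₀⟩ := hne
        exact ⟨fun s => -x₀ s, (hQQ' x₀).mp hx₀⟩)
    refine ⟨-M', ?_, ?_⟩
    · constructor
      · obtain ⟨y, hyQ', hysum⟩ := hG'.1
        refine ⟨fun s => -y s, ?_, ?_⟩
        · have : ∀ s, -(-y s) = y s := fun s => neg_neg _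
          have hyQ2 := (hQQ' (fun s => -y s))
          apply hyQ2.mpr
          simpa [neg_neg] using hyQ'
        · have hysum' : ∑ s, y s = M' := hysum
          show (∑ s, -y s) = -M'
          rw [Finset.sum_neg_distrib, hysum']
      · rintro w ⟨z, hz, rfl⟩
        have hz' := (hQQ' z).mp hz
        have h2 := hG'.2 ⟨fun s => -z s, hz', rfl⟩
        have h3 : (∑ s, -z s) ≤ M' := h2
        rw [Finset.sum_neg_distrib] at h3
        show -M' ≤ ∑ s, z s
        linarith
    · constructor
      · obtain ⟨X₁, X₂, hM'⟩ := hL'.1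
        refine ⟨X₁, X₂, ?_⟩
        simp only [hb1', hb2', hf', hg', Finset.sum_neg_distrib] at hM'
        linarith
      · rintro w ⟨X₁, X₂, rfl⟩
        have hmem : b1' X₁ + b2' X₂ + ∑ s ∈ X₁ᶜ ∩ X₂ᶜ, g' s - ∑ s ∈ X₁ ∩ X₂, f' s
            = -(p1 X₁ + p2 X₂ + ∑ s ∈ X₁ᶜ ∩ X₂ᶜ, f s - ∑ s ∈ X₁ ∩ X₂, g s) := by
          simp only [hb1', hb2', hf', hg', Finset.sum_neg_distrib]
          ring
        have := hL'.2 ⟨X₁, X₂, hmem.symm⟩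
        linarith
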